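/- Let d : A → B be a homomorphism of Noetherian rings H and I ⊆ A, J ⊆ B ideals with d(I^n) ⊆ J^n such that the induced maps A/I^n → B/J^n are isomorphisms for all n ≥ 1. Then for every maximal ideal 𝔪 of B containing J, the induced morphism Spec B → Spec A is étale (formally étale and of finite presentation, assuming A, B are finitely generated k-algebras) at [𝔪]; equivalently, d induces an isomorphism of the completions of the local rings A_{d^{-1}(𝔪)} and B_𝔪. -/

import Mathlib

set_option synthInstance.maxHeartbeats 400000
set_option maxHeartbeats 1000000

section Aux

variable {R S : Type*} [CommRing R] [CommRing S]

private lemma smul_top_eq_pow (I : Ideal R) (n : ℕ) :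
    (I ^ n • ⊤ : Ideal R) = I ^ n := by
  ext x; simp

/-- If `L : R →+* S` induces isomorphisms `R/Iⁿ ≃ S/Kⁿ` for all `n`, then it induces a ring
isomorphism of the adic completions, compatible with the canonical maps. -/
private theorem auxAdic (I : Ideal R) (K : Ideal S) (L : R →+* S)
    (hk : ∀ n : ℕ, ∀ x : R, x ∈ I ^ n → L x ∈ K ^ n)
    (hs : ∀ n : ℕ, ∀ y : S, ∃ x : R, L x - y ∈ K ^ n)
    (hi : ∀ n : ℕ, ∀ x : R, L x ∈ K ^ n → x ∈ I ^ n) :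
    ∃ e : AdicCompletion I R ≃+* AdicCompletion K S,
      ∀ x, e (algebraMap R _ x) = algebraMap S _ (L x) := by
  -- the induced maps on the quotients
  have hker : ∀ (n : ℕ) (x : R), x ∈ (I ^ n • ⊤ : Ideal R) →
      (Ideal.Quotient.mk (K ^ n • ⊤ : Ideal S)).comp L x = 0 := by
    intro n x hx
    rw [smul_top_eq_pow] at hx
    simp only [RingHom.coe_comp, Function.comp_apply, Ideal.Quotient.eq_zero_iff_mem,
      smul_top_eq_pow]
    exact hk n x hx
  let e0 : ∀ n : ℕ, R ⧸ (I ^ n • ⊤ : Ideal R) →+* S ⧸ (K ^ n • ⊤ : Ideal S) := fun n =>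
    Ideal.Quotient.lift _ ((Ideal.Quotient.mk (K ^ n • ⊤ : Ideal S)).comp L) (hker n)
  have e0_mk : ∀ (n : ℕ) (x : R),
      e0 n (Ideal.Quotient.mk _ x) = Ideal.Quotient.mk _ (L x) := fun n x =>
    Ideal.Quotient.lift_mk _ _ _
  have hbij : ∀ n, Function.Bijective (e0 n) := by
    intro n
    constructor
    · rw [injective_iff_map_eq_zero]
      intro a ha
      obtain ⟨x, rfl⟩ := Ideal.Quotient.mk_surjective a
      rw [e0_mk, Ideal.Quotient.eq_zero_iff_mem, smul_top_eq_pow] at ha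
      rw [Ideal.Quotient.eq_zero_iff_mem, smul_top_eq_pow]
      exact hi n x ha
    · intro y
      obtain ⟨y0, rfl⟩ := Ideal.Quotient.mk_surjective y
      obtain ⟨x, hx⟩ := hs n y0
      refine ⟨Ideal.Quotient.mk _ x, ?_⟩
      rw [e0_mk, Ideal.Quotient.eq, smul_top_eq_pow]
      exact hx
  let e1 : ∀ n : ℕ, R ⧸ (I ^ n • ⊤ : Ideal R) ≃+* S ⧸ (K ^ n • ⊤ : Ideal S) := fun n =>
    RingEquiv.ofBijective (e0 n) (hbij n)
  have e1_mk : ∀ (n : ℕ) (x : R),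
      e1 n (Ideal.Quotient.mk _ x) = Ideal.Quotient.mk _ (L x) := fun n x => e0_mk n x
  -- compatibility with the transition maps
  have hcompat : ∀ {m n : ℕ} (hmn : m ≤ n) (x : R ⧸ (I ^ n • ⊤ : Ideal R)),
      AdicCompletion.transitionMap K S hmn (e1 n x) =
        e1 m (AdicCompletion.transitionMap I R hmn x) := by
    intro m n hmn x
    obtain ⟨x, rfl⟩ := Ideal.Quotient.mk_surjective x
    have h1 : AdicCompletion.transitionMap I R hmn
        (Ideal.Quotient.mk (I ^ n • ⊤ : Ideal R) x) =
        Ideal.Quotient.mk (I ^ m • ⊤ : Ideal R) x := rfl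
    have h2 : AdicCompletion.transitionMap K S hmn
        (Ideal.Quotient.mk (K ^ n • ⊤ : Ideal S) (L x)) =
        Ideal.Quotient.mk (K ^ m • ⊤ : Ideal S) (L x) := rfl
    rw [e1_mk, h1, e1_mk, h2]
  refine ⟨{ toFun := fun f => ⟨fun n => e1 n (f.val n), fun {m n} hmn => by
              rw [hcompat hmn, f.2 hmn]⟩
            invFun := fun g => ⟨fun n => (e1 n).symm (g.val n), fun {m n} hmn => by
              apply (e1 m).injective
              rw [← hcompat hmn]
              simp only [RingEquiv.apply_symm_apply]
              exact g.2 hmn⟩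
            left_inv := fun f => Subtype.ext (funext fun n => (e1 n).symm_apply_apply _)
            right_inv := fun g => Subtype.ext (funext fun n => (e1 n).apply_symm_apply _)
            map_mul' := fun f g => Subtype.ext (funext fun n => map_mul (e1 n) _ _)
            map_add' := fun f g => Subtype.ext (funext fun n => map_add (e1 n) _ _) },
    fun x => Subtype.ext (funext fun n => ?_)⟩
  show e1 n (Ideal.Quotient.mk _ x) = Ideal.Quotient.mk _ (L x)
  exact e1_mk n x

end Aux

/-- let `d : A → B` be a homomorphism of affine `k`-algebras, `I ⊆ A`,
`J ⊆ B` ideals with `d(Iⁿ) ⊆ Jⁿ` such that the induced maps `A/Iⁿ → B/Jⁿ` are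
isomorphisms for all `n ≥ 1`.  Then for every maximal ideal `𝔪` of `B` containing `J`,
`d` induces an isomorphism between the completion of the local ring `A_{d⁻¹(𝔪)}`
(at its maximal ideal) and the completion of the local ring `B_𝔪`, i.e. the induced
morphism `Spec B → Spec A` is étale at `[𝔪]`. -/
theorem stmt7 {k A B : Type*} [Field k] [IsAlgClosed k] [CharZero k]
    [CommRing A] [CommRing B] [Algebra k A] [Algebra k B]
    [Algebra.FiniteType k A] [Algebra.FiniteType k B]
    (d : A →ₐ[k] B) (I : Ideal A) (J : Ideal B)
    (hIJ : ∀ n : ℕ, ∀ a ∈ I ^ n, d a ∈ J ^ n)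
    (hiso : ∀ n : ℕ, 1 ≤ n → ∀ b : B, ∃ a : A, d a - b ∈ J ^ n)  -- surjectivity mod Jⁿ
    (hinj : ∀ n : ℕ, 1 ≤ n → ∀ a : A, d a ∈ J ^ n → a ∈ I ^ n)   -- injectivity mod Jⁿ
    (𝔪 : Ideal B) [𝔪.IsMaximal] (hJ𝔪 : J ≤ 𝔪) :
    ∃ e : AdicCompletion (IsLocalRing.maximalIdeal
            (Localization.AtPrime (𝔪.comap (d : A →+* B))))
          (Localization.AtPrime (𝔪.comap (d : A →+* B))) ≃+*
        AdicCompletion (IsLocalRing.maximalIdeal (Localization.AtPrime 𝔪))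
          (Localization.AtPrime 𝔪),
      ∀ x, e (algebraMap _ _ x) =
        algebraMap (Localization.AtPrime 𝔪) _
          (Localization.localRingHom (𝔪.comap (d : A →+* B)) 𝔪 (d : A →+* B) rfl x) := by
  classical
  have hmem𝔭 : ∀ a : A, a ∈ 𝔪.comap (d : A →+* B) ↔ d a ∈ 𝔪 := fun a => Iff.rfl
  have hI𝔭 : I ≤ 𝔪.comap (d : A →+* B) := by
    intro a ha
    have h1 : d a ∈ J ^ 1 := hIJ 1 a (by simpa using ha)
    exact hJ𝔪 (by simpa using h1)
  -- surjectivity of `d` modulo `𝔪 ^ n`, for every `n`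
  have hsurj : ∀ (n : ℕ) (b : B), ∃ a : A, d a - b ∈ 𝔪 ^ n := by
    intro n b
    obtain ⟨a, ha⟩ := hiso (max n 1) (le_max_right n 1) b
    exact ⟨a, Ideal.pow_right_mono hJ𝔪 n
      (Ideal.pow_le_pow_right (le_max_left n 1) ha)⟩
  -- every element of `𝔪 ^ n` is `d p + j` with `p ∈ 𝔭 ^ n` and `j ∈ J ^ N`
  have main : ∀ (n N : ℕ), 1 ≤ N → ∀ x ∈ 𝔪 ^ n,
      ∃ p ∈ (𝔪.comap (d : A →+* B)) ^ n, x - d p ∈ J ^ N := by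
    intro n
    induction n with
    | zero =>
      intro N hN x _
      obtain ⟨a, ha⟩ := hiso N hN x
      exact ⟨a, by simp, by simpa using (neg_mem ha : -(d a - x) ∈ J ^ N)⟩
    | succ n ih =>
      intro N hN x hx
      rw [pow_succ] at hx
      refine Submodule.mul_induction_on hx ?_ ?_
      · intro m hm r hr
        obtain ⟨p, hp, hj⟩ := ih N hN m hm
        obtain ⟨a, ha⟩ := hiso N hN r
        have haP : a ∈ 𝔪.comap (d : A →+* B) := by
          rw [hmem𝔭]
          have h1 : d a - r ∈ 𝔪 := hJ𝔪 (Ideal.pow_le_self (by omega) ha)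
          have h2 := add_mem h1 hr
          simpa using h2
        refine ⟨p * a, Ideal.mul_mem_mul hp haP, ?_⟩
        have key : m * r - d (p * a) = (m - d p) * r + d p * -(d a - r) := by
          rw [map_mul]; ring
        rw [key]
        exact add_mem (Ideal.mul_mem_right _ _ hj) (Ideal.mul_mem_left _ _ (neg_mem ha))
      · intro x y hx' hy'
        obtain ⟨p, hp, h⟩ := hx'
        obtain ⟨q, hq, h'⟩ := hy'
        refine ⟨p + q, add_mem hp hq, ?_⟩
        have key : x + y - d (p + q) = (x - d p) + (y - d q) := by rw [map_add]; ring
        rw [key]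
        exact add_mem h h'
  -- injectivity of `d` modulo `𝔪 ^ n`
  have hinj' : ∀ (n : ℕ) (a : A), d a ∈ 𝔪 ^ n → a ∈ (𝔪.comap (d : A →+* B)) ^ n := by
    intro n a ha
    rcases Nat.eq_zero_or_pos n with rfl | hn
    · simp
    · obtain ⟨p, hp, h⟩ := main n n hn (d a) ha
      have hIa : a - p ∈ I ^ n := hinj n hn _ (by simpa [map_sub] using h)
      have hPa : a - p ∈ (𝔪.comap (d : A →+* B)) ^ n := Ideal.pow_right_mono hI𝔭 n hIa
      simpa using add_mem hPa hp
  -- now pass to the localizations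
  set 𝔭 : Ideal A := 𝔪.comap (d : A →+* B) with h𝔭
  let LA := Localization.AtPrime 𝔭
  let LB := Localization.AtPrime 𝔪
  let NA := IsLocalRing.maximalIdeal LA
  let NB := IsLocalRing.maximalIdeal LB
  let L : LA →+* LB := Localization.localRingHom 𝔭 𝔪 (d : A →+* B) rfl
  have hNA : NA = Ideal.map (algebraMap A LA) 𝔭 :=
    (Localization.AtPrime.map_eq_maximalIdeal).symm
  have hNB : NB = Ideal.map (algebraMap B LB) 𝔪 :=
    (Localization.AtPrime.map_eq_maximalIdeal).symm
  have hNBn : ∀ n : ℕ, NB ^ n = Ideal.map (algebraMap B LB) (𝔪 ^ n) := by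
    intro n; rw [Ideal.map_pow, ← hNB]
  have hNAn : ∀ n : ℕ, NA ^ n = Ideal.map (algebraMap A LA) (𝔭 ^ n) := by
    intro n; rw [Ideal.map_pow, ← hNA]
  have hLalg : ∀ a : A, L (algebraMap A LA a) = algebraMap B LB (d a) := fun a =>
    Localization.localRingHom_to_map 𝔭 𝔪 (d : A →+* B) rfl a
  -- `L` maps `NA ^ n` into `NB ^ n`
  have hk : ∀ (n : ℕ) (x : LA), x ∈ NA ^ n → L x ∈ NB ^ n := by
    intro n x hx
    have h1 : Ideal.map L NA ≤ NB := by
      rw [hNA, Ideal.map_map]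
      have hco : L.comp (algebraMap A LA) = (algebraMap B LB).comp (d : A →+* B) :=
        RingHom.ext fun a => hLalg a
      rw [hco, ← Ideal.map_map, hNB]
      exact Ideal.map_mono (Ideal.map_le_iff_le_comap.2 le_rfl)
    have h2 : Ideal.map L (NA ^ n) ≤ NB ^ n := by
      rw [Ideal.map_pow]
      exact Ideal.pow_right_mono h1 n
    exact h2 (Ideal.mem_map_of_mem L hx)
  -- surjectivity of `L` modulo `NB ^ n`
  have hs : ∀ (n : ℕ) (y : LB), ∃ x : LA, L x - y ∈ NB ^ n := by
    intro n y
    rcases Nat.eq_zero_or_pos n with rfl | hn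
    · exact ⟨0, by simp⟩
    obtain ⟨⟨b, s⟩, rfl⟩ := IsLocalization.mk'_surjective 𝔪.primeCompl y
    obtain ⟨a, ha⟩ := hsurj n b
    obtain ⟨t, ht⟩ := hsurj n (s : B)
    have htP : t ∉ 𝔭 := by
      intro htP
      have h1 : d t - (s : B) ∈ 𝔪 := Ideal.pow_le_self (by omega) ht
      have h2 : d t ∈ 𝔪 := (hmem𝔭 t).1 htP
      have h3 : (s : B) ∈ 𝔪 := by simpa using sub_mem h2 h1
      exact s.2 h3
    refine ⟨IsLocalization.mk' LA a (⟨t, htP⟩ : (𝔪.comap (d : A →+* B)).primeCompl), ?_⟩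
    have hLx : L (IsLocalization.mk' LA a (⟨t, htP⟩ : (𝔪.comap (d : A →+* B)).primeCompl)) =
        IsLocalization.mk' LB (d a) (⟨d t, fun h => htP h⟩ : 𝔪.primeCompl) :=
      Localization.localRingHom_mk' 𝔭 𝔪 (d : A →+* B) rfl a (⟨t, htP⟩ : (𝔪.comap (d : A →+* B)).primeCompl)
    rw [hLx, hNBn n]
    have hu1 : IsUnit (algebraMap B LB (d t)) :=
      IsLocalization.map_units LB (⟨d t, fun h => htP h⟩ : 𝔪.primeCompl)
    have hu2 : IsUnit (algebraMap B LB (s : B)) := IsLocalization.map_units LB s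
    rw [← Ideal.unit_mul_mem_iff_mem _ hu1, ← Ideal.unit_mul_mem_iff_mem _ hu2]
    have e1 : algebraMap B LB (d t) *
        IsLocalization.mk' LB (d a) (⟨d t, fun h => htP h⟩ : 𝔪.primeCompl) =
        algebraMap B LB (d a) := IsLocalization.mk'_spec' LB (d a) (⟨d t, fun h => htP h⟩ : 𝔪.primeCompl)
    have e2 : algebraMap B LB (s : B) * IsLocalization.mk' LB b s =
        algebraMap B LB b := IsLocalization.mk'_spec' LB b s
    have hcalc : algebraMap B LB (s : B) * (algebraMap B LB (d t) *
        (IsLocalization.mk' LB (d a) (⟨d t, fun h => htP h⟩ : 𝔪.primeCompl) -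
          IsLocalization.mk' LB b s)) =
        algebraMap B LB ((s : B) * d a - d t * b) := by
      have expand : algebraMap B LB (s : B) * (algebraMap B LB (d t) *
          (IsLocalization.mk' LB (d a) (⟨d t, fun h => htP h⟩ : 𝔪.primeCompl) -
            IsLocalization.mk' LB b s)) =
          algebraMap B LB (s : B) * (algebraMap B LB (d t) *
            IsLocalization.mk' LB (d a) (⟨d t, fun h => htP h⟩ : 𝔪.primeCompl)) -
          algebraMap B LB (d t) * (algebraMap B LB (s : B) *
            IsLocalization.mk' LB b s) := by ring
      rw [expand, e1, e2, map_sub, map_mul, map_mul]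
    rw [hcalc]
    refine Ideal.mem_map_of_mem _ ?_
    have hnum : (s : B) * d a - d t * b = d a * -(d t - (s : B)) + (d a - b) * d t := by ring
    rw [hnum]
    exact add_mem (Ideal.mul_mem_left _ _ (neg_mem ht)) (Ideal.mul_mem_right _ _ ha)
  -- injectivity of `L` modulo `NB ^ n`
  have hi : ∀ (n : ℕ) (x : LA), L x ∈ NB ^ n → x ∈ NA ^ n := by
    intro n x hx
    rcases Nat.eq_zero_or_pos n with rfl | hn
    · simp
    obtain ⟨⟨a, t⟩, rfl⟩ := IsLocalization.mk'_surjective 𝔭.primeCompl x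
    have hLx : L (IsLocalization.mk' LA a t) =
        IsLocalization.mk' LB (d a) (⟨d t, fun h => t.2 h⟩ : 𝔪.primeCompl) :=
      Localization.localRingHom_mk' 𝔭 𝔪 (d : A →+* B) rfl a t
    rw [hLx, hNBn n,
      IsLocalization.mk'_mem_map_algebraMap_iff 𝔪.primeCompl] at hx
    obtain ⟨u, hu, hua⟩ := hx
    obtain ⟨c, hc⟩ := hsurj n u
    have hcP : c ∉ 𝔭 := by
      intro hcP
      have h1 : d c - u ∈ 𝔪 := Ideal.pow_le_self (by omega) hc
      have h2 : d c ∈ 𝔪 := (hmem𝔭 c).1 hcP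
      have h3 : u ∈ 𝔪 := by simpa using sub_mem h2 h1
      exact hu h3
    have hca : d (c * a) ∈ 𝔪 ^ n := by
      have h1 : (d c - u) * d a ∈ 𝔪 ^ n := Ideal.mul_mem_right _ _ hc
      have key : d (c * a) = u * d a + (d c - u) * d a := by rw [map_mul]; ring
      rw [key]
      exact add_mem hua h1
    have hPn : c * a ∈ 𝔭 ^ n := hinj' n _ hca
    rw [hNAn n, IsLocalization.mk'_mem_map_algebraMap_iff 𝔭.primeCompl]
    exact ⟨c, hcP, hPn⟩
  obtain ⟨e, he⟩ := auxAdic NA NB L hk hs hi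
  exact ⟨e, he⟩
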